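/- Assume the positivity condition: l_j − L_j(τ) > 0 for every τ ∈ ℝ^ℓ and every j. Then for every η ∈ ℝ^ℓ: (i) the function τ ↦ 2⟨η, τ⟩ − K_λ(τ) is bounded above on ℝ^ℓ if and only if η belongs to the moment polytope Δ := { x ∈ ℝ^ℓ : 0 ≤ x_j ≤ l_j − Σ_{i<j} c_{ji} x_i for all j }; and (ii) this function attains a finite maximum at some point τ₀ ∈ ℝ^ℓ if and only if η = J(τ₀) for some τ₀ ∈ ℝ^ℓ, i.e. if and only if η lies in the image of the moment map J = (J₁, …, J_ℓ). -/

import Mathlib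

open Real Finset

noncomputable section

/-- `K(t) = log(1 + e^{2t})`. -/
def Kfun (t : ℝ) : ℝ := Real.log (1 + Real.exp (2 * t))

/-- `𝒥(t) = e^{2t}/(1 + e^{2t})`. -/
def Jfun (t : ℝ) : ℝ := Real.exp (2 * t) / (1 + Real.exp (2 * t))

/-- The coordinate change `Φ(σ)_i = σ_i + (1/2)·Σ_{j>i} c_{ji} K(σ_j)`. -/
def Phi {ℓ : ℕ} (c : Fin ℓ → Fin ℓ → ℤ) (σ : Fin ℓ → ℝ) : Fin ℓ → ℝ :=
  fun i => σ i + (1 / 2) * ∑ j ∈ Finset.univ.filter (fun j => i < j), (c j i : ℝ) * Kfun (σ j)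

/-- The inverse of the coordinate change `Φ`. -/
def PhiInv {ℓ : ℕ} (c : Fin ℓ → Fin ℓ → ℤ) : (Fin ℓ → ℝ) → (Fin ℓ → ℝ) :=
  Function.invFun (Phi c)

/-- The Kähler potential `K_λ(τ) = Σ_i l_i K(τ̃_i)`, where `τ̃ = Φ⁻¹(τ)`. -/
def Klam {ℓ : ℕ} (l : Fin ℓ → ℤ) (c : Fin ℓ → Fin ℓ → ℤ) (τ : Fin ℓ → ℝ) : ℝ :=
  ∑ i, (l i : ℝ) * Kfun (PhiInv c τ i)

/-- The action variables `J_j(τ) = (1/2)·∂K_λ/∂τ_j`. -/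
def Jact {ℓ : ℕ} (l : Fin ℓ → ℤ) (c : Fin ℓ → Fin ℓ → ℤ) (j : Fin ℓ) (τ : Fin ℓ → ℝ) : ℝ :=
  (1 / 2) * fderiv ℝ (Klam l c) τ (Pi.single j 1)

/-- `L_j(τ) = Σ_{i<j} c_{ji} J_i(τ)`. -/
def Lfun {ℓ : ℕ} (l : Fin ℓ → ℤ) (c : Fin ℓ → Fin ℓ → ℤ) (j : Fin ℓ) (τ : Fin ℓ → ℝ) : ℝ :=
  ∑ i ∈ Finset.univ.filter (fun i => i < j), (c j i : ℝ) * Jact l c i τ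

/-! ### One-variable lemmas -/

lemma one_add_exp_pos (t : ℝ) : (0:ℝ) < 1 + Real.exp (2 * t) := by positivity

lemma hasDerivAt_Kfun (t : ℝ) : HasDerivAt Kfun (2 * Jfun t) t := by
  have h1 : HasDerivAt (fun t : ℝ => 2 * t) 2 t := by
    simpa using (hasDerivAt_id t).const_mul 2
  have h2 : HasDerivAt (fun t : ℝ => 1 + Real.exp (2 * t)) (Real.exp (2 * t) * 2) t := by
    simpa using ((h1.exp).const_add 1)
  have h3 := h2.log (ne_of_gt (one_add_exp_pos t))
  show HasDerivAt (fun t => Real.log (1 + Real.exp (2 * t))) _ t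
  convert h3 using 1
  unfold Jfun; field_simp

lemma Jfun_pos (t : ℝ) : 0 < Jfun t := by unfold Jfun; positivity

lemma Jfun_mono : Monotone Jfun := by
  intro s t hst
  unfold Jfun
  rw [div_le_div_iff₀ (one_add_exp_pos s) (one_add_exp_pos t)]
  have := Real.exp_le_exp.mpr (by linarith : 2*s ≤ 2*t)
  nlinarith

lemma Kfun_nonneg (t : ℝ) : 0 ≤ Kfun t := by
  unfold Kfun
  have : (1:ℝ) ≤ 1 + Real.exp (2*t) := by nlinarith [Real.exp_pos (2*t)]
  exact Real.log_nonneg this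

lemma two_mul_le_Kfun (t : ℝ) : 2 * t ≤ Kfun t := by
  unfold Kfun
  calc 2*t = Real.log (Real.exp (2*t)) := (Real.log_exp _).symm
  _ ≤ _ := Real.log_le_log (Real.exp_pos _) (by linarith)

lemma Kfun_le (t : ℝ) : Kfun t ≤ max 0 (2*t) + 1 := by
  unfold Kfun
  have h : (1:ℝ) + Real.exp (2*t) ≤ 2 * Real.exp (max 0 (2*t)) := by
    have h1 : Real.exp (2*t) ≤ Real.exp (max 0 (2*t)) := Real.exp_le_exp.mpr (le_max_right _ _)
    have h2 : (1:ℝ) ≤ Real.exp (max 0 (2*t)) := by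
      rw [← Real.exp_zero]; exact Real.exp_le_exp.mpr (le_max_left _ _)
    linarith
  calc Real.log (1 + Real.exp (2*t)) ≤ Real.log (2 * Real.exp (max 0 (2*t))) :=
        Real.log_le_log (one_add_exp_pos t) h
  _ = Real.log 2 + max 0 (2*t) := by
        rw [Real.log_mul (by norm_num) (Real.exp_ne_zero _), Real.log_exp]
  _ ≤ max 0 (2*t) + 1 := by have := Real.log_two_lt_d9; linarith

/-- one-variable: if `0 ≤ η ≤ m` then `2ηs - m K(s) ≤ 0`. -/
lemma g_nonpos {η m s : ℝ} (h0 : 0 ≤ η) (h1 : η ≤ m) : 2 * η * s - m * Kfun s ≤ 0 := by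
  have hK := Kfun_nonneg s
  have hK2 := two_mul_le_Kfun s
  nlinarith

/-- one-variable tangent-line: `K s - K s₀ ≥ 2 𝒥(s₀)(s - s₀)`. -/
lemma Kfun_tangent (s₀ s : ℝ) : 2 * Jfun s₀ * (s - s₀) ≤ Kfun s - Kfun s₀ := by
  set h : ℝ → ℝ := fun s => Kfun s - 2 * Jfun s₀ * s with hh
  have hd : ∀ x : ℝ, HasDerivAt h (2 * Jfun x - 2 * Jfun s₀) x := by
    intro x
    exact ((hasDerivAt_Kfun x).sub ((hasDerivAt_id x).const_mul (2 * Jfun s₀))).congr_deriv (by ring)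
  have hcont : Continuous h :=
    Differentiable.continuous (fun x => (hd x).differentiableAt)
  have key : h s₀ ≤ h s := by
    rcases le_total s₀ s with hle | hle
    · have mono : MonotoneOn h (Set.Ici s₀) := by
        apply monotoneOn_of_deriv_nonneg (convex_Ici s₀) hcont.continuousOn
        · intro x hx; exact (hd x).differentiableAt.differentiableWithinAt
        · intro x hx
          rw [(hd x).deriv]
          have : Jfun s₀ ≤ Jfun x := Jfun_mono (le_of_lt (by simpa using hx))
          linarith
      exact mono Set.self_mem_Ici hle hle
    · have anti : AntitoneOn h (Set.Iic s₀) := by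
        apply antitoneOn_of_deriv_nonpos (convex_Iic s₀) hcont.continuousOn
        · intro x hx; exact (hd x).differentiableAt.differentiableWithinAt
        · intro x hx
          rw [(hd x).deriv]
          have : Jfun x ≤ Jfun s₀ := Jfun_mono (le_of_lt (by simpa using hx))
          linarith
      exact anti hle Set.self_mem_Iic hle
  simp only [hh] at key
  nlinarith [key]

/-- one-variable max: if `m > 0` and `η = m 𝒥(s₀)` then `g(s) ≤ g(s₀)`. -/
lemma g_max {η m s₀ : ℝ} (hm : 0 < m) (he : η = m * Jfun s₀) (s : ℝ) :
    2 * η * s - m * Kfun s ≤ 2 * η * s₀ - m * Kfun s₀ := by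
  subst he
  have h2 := mul_le_mul_of_nonneg_left (Kfun_tangent s₀ s) hm.le
  nlinarith [h2]

/-! ### The explicit inverse `Psi` of `Phi` -/

def Psi {ℓ : ℕ} (c : Fin ℓ → Fin ℓ → ℤ) (τ : Fin ℓ → ℝ) (i : Fin ℓ) : ℝ :=
  τ i - (1 / 2) * ∑ j ∈ (Finset.univ.filter (fun j => i < j)).attach,
    (c j.1 i : ℝ) * Kfun (Psi c τ j.1)
termination_by ℓ - i.val
decreasing_by
  have := (Finset.mem_filter.mp j.2).2
  omega

lemma Psi_eq {ℓ : ℕ} (c : Fin ℓ → Fin ℓ → ℤ) (τ : Fin ℓ → ℝ) (i : Fin ℓ) :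
    Psi c τ i = τ i - (1 / 2) * ∑ j ∈ Finset.univ.filter (fun j => i < j),
      (c j i : ℝ) * Kfun (Psi c τ j) := by
  rw [Psi, ← Finset.sum_attach (Finset.univ.filter (fun j => i < j))
    (fun j => (c j i : ℝ) * Kfun (Psi c τ j))]

lemma Phi_Psi {ℓ : ℕ} (c : Fin ℓ → Fin ℓ → ℤ) (τ : Fin ℓ → ℝ) : Phi c (Psi c τ) = τ := by
  funext i
  rw [Phi, Psi_eq]
  ring

lemma Psi_Phi_aux {ℓ : ℕ} (c : Fin ℓ → Fin ℓ → ℤ) (σ : Fin ℓ → ℝ) :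
    ∀ n (i : Fin ℓ), ℓ - i.val ≤ n → Psi c (Phi c σ) i = σ i := by
  intro n
  induction n with
  | zero => intro i h; omega
  | succ n ih =>
    intro i h
    rw [Psi_eq, Phi]
    have : ∑ j ∈ Finset.univ.filter (fun j => i < j), (c j i : ℝ) * Kfun (Psi c (Phi c σ) j)
        = ∑ j ∈ Finset.univ.filter (fun j => i < j), (c j i : ℝ) * Kfun (σ j) := by
      apply Finset.sum_congr rfl
      intro j hj
      have hij := (Finset.mem_filter.mp hj).2
      rw [ih j (by omega)]
    rw [this]; ring

lemma Psi_Phi {ℓ : ℕ} (c : Fin ℓ → Fin ℓ → ℤ) (σ : Fin ℓ → ℝ) : Psi c (Phi c σ) = σ :=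
  funext fun i => Psi_Phi_aux c σ ℓ i (by omega)

lemma Phi_injective {ℓ : ℕ} (c : Fin ℓ → Fin ℓ → ℤ) : Function.Injective (Phi c) :=
  Function.LeftInverse.injective (g := Psi c) (Psi_Phi c)

lemma PhiInv_eq_Psi {ℓ : ℕ} (c : Fin ℓ → Fin ℓ → ℤ) : PhiInv c = Psi c := by
  funext τ
  have h : Phi c (PhiInv c τ) = τ := Function.invFun_eq ⟨Psi c τ, Phi_Psi c τ⟩
  exact Phi_injective c (h.trans (Phi_Psi c τ).symm)

lemma Klam_comp {ℓ : ℕ} (l : Fin ℓ → ℤ) (c : Fin ℓ → Fin ℓ → ℤ) (σ : Fin ℓ → ℝ) :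
    Klam l c (Phi c σ) = ∑ i, (l i : ℝ) * Kfun (σ i) := by
  simp [Klam, PhiInv_eq_Psi, Psi_Phi]

/-! ### Differentiability -/

lemma hasFDerivAt_Kcomp {ℓ : ℕ} (j : Fin ℓ) (σ : Fin ℓ → ℝ) :
    HasFDerivAt (fun σ : Fin ℓ → ℝ => Kfun (σ j))
      ((2 * Jfun (σ j)) • ContinuousLinearMap.proj (R := ℝ) (φ := fun _ : Fin ℓ => ℝ) j) σ :=
  (hasDerivAt_Kfun (σ j)).comp_hasFDerivAt (h₂ := Kfun) (f := fun σ : Fin ℓ → ℝ => σ j) σ (hasFDerivAt_apply j σ)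

lemma diff_Psi {ℓ : ℕ} (c : Fin ℓ → Fin ℓ → ℤ) :
    ∀ n (i : Fin ℓ), ℓ - i.val ≤ n → Differentiable ℝ (fun τ => Psi c τ i) := by
  intro n
  induction n with
  | zero => intro i h; omega
  | succ n ih =>
    intro i h
    have heq : (fun τ => Psi c τ i) = fun τ : Fin ℓ → ℝ => τ i - (1 / 2) *
        ∑ j ∈ Finset.univ.filter (fun j => i < j), (c j i : ℝ) * Kfun (Psi c τ j) := by
      funext τ; exact Psi_eq c τ i
    rw [heq]
    have h1 : Differentiable ℝ (fun τ : Fin ℓ → ℝ => τ i) := differentiable_apply i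
    apply Differentiable.sub h1
    apply Differentiable.const_mul
    apply Differentiable.fun_sum
    intro j hj
    have hij := (Finset.mem_filter.mp hj).2
    apply Differentiable.const_mul
    have hdj : Differentiable ℝ (fun τ => Psi c τ j) := ih j (by omega)
    intro τ
    exact (hasDerivAt_Kfun (Psi c τ j)).differentiableAt.comp (g := Kfun) (f := fun τ => Psi c τ j) τ (hdj τ)

lemma diff_Klam {ℓ : ℕ} (l : Fin ℓ → ℤ) (c : Fin ℓ → Fin ℓ → ℤ) :
    Differentiable ℝ (Klam l c) := by
  have heq : Klam l c = fun τ => ∑ i, (l i : ℝ) * Kfun (Psi c τ i) := by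
    funext τ; simp [Klam, PhiInv_eq_Psi]
  rw [heq]
  apply Differentiable.fun_sum
  intro i _
  apply Differentiable.const_mul
  intro τ
  exact (hasDerivAt_Kfun (Psi c τ i)).differentiableAt.comp (g := Kfun) (f := fun τ => Psi c τ i) τ (diff_Psi c ℓ i (by omega) τ)

/-! ### The derivative of `Phi` and the moment-map formula -/

abbrev proj' {ℓ : ℕ} (i : Fin ℓ) : (Fin ℓ → ℝ) →L[ℝ] ℝ :=
  ContinuousLinearMap.proj (R := ℝ) (φ := fun _ : Fin ℓ => ℝ) i

def Dphi {ℓ : ℕ} (c : Fin ℓ → Fin ℓ → ℤ) (σ : Fin ℓ → ℝ) : (Fin ℓ → ℝ) →L[ℝ] (Fin ℓ → ℝ) :=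
  ContinuousLinearMap.pi fun i => proj' i + (1 / 2 : ℝ) •
    ∑ j ∈ Finset.univ.filter (fun j => i < j),
      (c j i : ℝ) • ((2 * Jfun (σ j)) • proj' j)

lemma hasFDerivAt_Phi {ℓ : ℕ} (c : Fin ℓ → Fin ℓ → ℤ) (σ : Fin ℓ → ℝ) :
    HasFDerivAt (Phi c) (Dphi c σ) σ := by
  show HasFDerivAt (fun σ (i : Fin ℓ) => σ i + (1 / 2) *
    ∑ j ∈ Finset.univ.filter (fun j => i < j), (c j i : ℝ) * Kfun (σ j)) _ σ
  unfold Dphi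
  rw [hasFDerivAt_pi]
  intro i
  apply HasFDerivAt.add (hasFDerivAt_apply i σ)
  exact (HasFDerivAt.fun_sum fun j _ => (hasFDerivAt_Kcomp j σ).const_mul ((c j i : ℝ))).const_mul _

def Ader {ℓ : ℕ} (l : Fin ℓ → ℤ) (σ : Fin ℓ → ℝ) : (Fin ℓ → ℝ) →L[ℝ] ℝ :=
  ∑ i, (l i : ℝ) • ((2 * Jfun (σ i)) • proj' i)

lemma hasFDerivAt_A {ℓ : ℕ} (l : Fin ℓ → ℤ) (σ : Fin ℓ → ℝ) :
    HasFDerivAt (fun σ : Fin ℓ → ℝ => ∑ i, (l i : ℝ) * Kfun (σ i)) (Ader l σ) σ :=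
  HasFDerivAt.fun_sum fun i _ => (hasFDerivAt_Kcomp i σ).const_mul ((l i : ℝ))

lemma Ader_single {ℓ : ℕ} (l : Fin ℓ → ℤ) (σ : Fin ℓ → ℝ) (k : Fin ℓ) :
    Ader l σ (Pi.single k 1) = 2 * (l k : ℝ) * Jfun (σ k) := by
  simp only [Ader, ContinuousLinearMap.sum_apply, ContinuousLinearMap.smul_apply,
    ContinuousLinearMap.proj_apply, Pi.single_apply, smul_eq_mul]
  rw [Finset.sum_eq_single k]
  · simp; ring
  · intro b _ hb; simp [hb]
  · simp

lemma Dphi_single {ℓ : ℕ} (c : Fin ℓ → Fin ℓ → ℤ) (σ : Fin ℓ → ℝ) (k : Fin ℓ) :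
    Dphi c σ (Pi.single k 1) = Pi.single k 1 +
      ∑ i ∈ Finset.univ.filter (fun i => i < k),
        ((c k i : ℝ) * Jfun (σ k)) • (Pi.single i 1 : Fin ℓ → ℝ) := by
  funext i
  simp only [Dphi, ContinuousLinearMap.pi_apply, ContinuousLinearMap.add_apply,
    ContinuousLinearMap.smul_apply, ContinuousLinearMap.sum_apply,
    ContinuousLinearMap.proj_apply, Pi.add_apply, Finset.sum_apply, Pi.smul_apply,
    smul_eq_mul]
  congr 1
  simp only [Pi.single_apply, mul_ite, mul_one, mul_zero, Finset.sum_ite_eq',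
    Finset.mem_filter, Finset.mem_univ, true_and]
  rw [Finset.sum_ite_eq]
  simp only [Finset.mem_filter, Finset.mem_univ, true_and]
  split_ifs with h
  · ring
  · rfl

lemma fderiv_Klam_single {ℓ : ℕ} (l : Fin ℓ → ℤ) (c : Fin ℓ → Fin ℓ → ℤ)
    (τ : Fin ℓ → ℝ) (i : Fin ℓ) :
    fderiv ℝ (Klam l c) τ (Pi.single i 1) = 2 * Jact l c i τ := by
  rw [Jact]; ring

lemma chain_rule {ℓ : ℕ} (l : Fin ℓ → ℤ) (c : Fin ℓ → Fin ℓ → ℤ) (σ : Fin ℓ → ℝ) :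
    (fderiv ℝ (Klam l c) (Phi c σ)).comp (Dphi c σ) = Ader l σ := by
  have h1 : HasFDerivAt (Klam l c ∘ Phi c)
      ((fderiv ℝ (Klam l c) (Phi c σ)).comp (Dphi c σ)) σ :=
    ((diff_Klam l c (Phi c σ)).hasFDerivAt).comp σ (hasFDerivAt_Phi c σ)
  have h2 : Klam l c ∘ Phi c = fun σ : Fin ℓ → ℝ => ∑ i, (l i : ℝ) * Kfun (σ i) :=
    funext fun σ => Klam_comp l c σ
  rw [h2] at h1
  exact h1.unique (hasFDerivAt_A l σ)

lemma Jact_formula {ℓ : ℕ} (l : Fin ℓ → ℤ) (c : Fin ℓ → Fin ℓ → ℤ) (σ : Fin ℓ → ℝ)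
    (k : Fin ℓ) :
    Jact l c k (Phi c σ) = ((l k : ℝ) - Lfun l c k (Phi c σ)) * Jfun (σ k) := by
  have hc := congrArg (fun T : (Fin ℓ → ℝ) →L[ℝ] ℝ => T (Pi.single k 1)) (chain_rule l c σ)
  simp only [ContinuousLinearMap.comp_apply] at hc
  rw [Dphi_single, map_add, map_sum, Ader_single, fderiv_Klam_single] at hc
  have hsum : ∑ i ∈ Finset.univ.filter (fun i => i < k),
      (fderiv ℝ (Klam l c) (Phi c σ)) (((c k i : ℝ) * Jfun (σ k)) • (Pi.single i 1 : Fin ℓ → ℝ))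
      = 2 * Jfun (σ k) * Lfun l c k (Phi c σ) := by
    rw [Lfun, Finset.mul_sum]
    apply Finset.sum_congr rfl
    intro i _
    rw [map_smul, smul_eq_mul, fderiv_Klam_single]
    ring
  rw [hsum] at hc
  nlinarith [hc]

/-! ### The separable form of the functional -/

/-- `m_k = l_k - Σ_{i<k} c_{ki} η_i`. -/
def mcoef {ℓ : ℕ} (l : Fin ℓ → ℤ) (c : Fin ℓ → Fin ℓ → ℤ) (η : Fin ℓ → ℝ) (k : Fin ℓ) : ℝ :=
  (l k : ℝ) - ∑ i ∈ Finset.univ.filter (fun i => i < k), (c k i : ℝ) * η i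

lemma F_Phi_eq {ℓ : ℕ} (l : Fin ℓ → ℤ) (c : Fin ℓ → Fin ℓ → ℤ) (η σ : Fin ℓ → ℝ) :
    2 * (∑ i, η i * Phi c σ i) - Klam l c (Phi c σ)
      = ∑ k, (2 * η k * σ k - mcoef l c η k * Kfun (σ k)) := by
  rw [Klam_comp]
  have swap : ∑ i : Fin ℓ, ∑ j ∈ Finset.univ.filter (fun j => i < j),
        η i * ((c j i : ℝ) * Kfun (σ j))
      = ∑ j : Fin ℓ, ∑ i ∈ Finset.univ.filter (fun i => i < j),
        η i * ((c j i : ℝ) * Kfun (σ j)) :=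
    Finset.sum_comm' (by intro x y; simp)
  have e1 : 2 * (∑ i, η i * Phi c σ i)
      = 2 * ∑ i, η i * σ i + ∑ i : Fin ℓ, ∑ j ∈ Finset.univ.filter (fun j => i < j),
          η i * ((c j i : ℝ) * Kfun (σ j)) := by
    unfold Phi
    rw [Finset.mul_sum, Finset.mul_sum, ← Finset.sum_add_distrib]
    apply Finset.sum_congr rfl
    intro i _
    rw [show ∑ j ∈ Finset.univ.filter (fun j => i < j), η i * ((c j i : ℝ) * Kfun (σ j))
        = η i * ∑ j ∈ Finset.univ.filter (fun j => i < j), (c j i : ℝ) * Kfun (σ j) from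
      (Finset.mul_sum _ _ _).symm]
    ring
  rw [e1, swap]
  rw [Finset.mul_sum, ← Finset.sum_add_distrib, ← Finset.sum_sub_distrib]
  apply Finset.sum_congr rfl
  intro k _
  rw [mcoef, sub_mul, Finset.sum_mul]
  have : ∑ i ∈ Finset.univ.filter (fun i => i < k), η i * ((c k i : ℝ) * Kfun (σ k))
      = ∑ i ∈ Finset.univ.filter (fun i => i < k), ((c k i : ℝ) * η i) * Kfun (σ k) := by
    apply Finset.sum_congr rfl; intro i _; ring
  rw [this]
  ring

/-! ### The linear part of the functional -/

lemma hasFDerivAt_lin {ℓ : ℕ} (η : Fin ℓ → ℝ) (τ₀ : Fin ℓ → ℝ) :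
    HasFDerivAt (fun τ : Fin ℓ → ℝ => 2 * (∑ i, η i * τ i))
      (∑ i, (2 * η i) • proj' i) τ₀ := by
  have heq : (fun τ : Fin ℓ → ℝ => 2 * (∑ i, η i * τ i))
      = ⇑(∑ i, (2 * η i) • proj' (ℓ := ℓ) i) := by
    funext τ
    simp only [ContinuousLinearMap.coe_sum', Finset.sum_apply,
      ContinuousLinearMap.smul_apply, ContinuousLinearMap.proj_apply, smul_eq_mul,
      Finset.mul_sum]
    apply Finset.sum_congr rfl
    intro i _; ring
  rw [heq]
  exact (∑ i, (2 * η i) • proj' (ℓ := ℓ) i).hasFDerivAt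

lemma lin_single {ℓ : ℕ} (η : Fin ℓ → ℝ) (j : Fin ℓ) :
    (∑ i, (2 * η i) • proj' (ℓ := ℓ) i) (Pi.single j 1) = 2 * η j := by
  simp only [ContinuousLinearMap.sum_apply, ContinuousLinearMap.smul_apply,
    ContinuousLinearMap.proj_apply, Pi.single_apply, smul_eq_mul]
  rw [Finset.sum_eq_single j]
  · simp
  · intro b _ hb; simp [hb]
  · simp


/-- Theorem 7.3 (analytic core): under the positivity condition, for `η ∈ ℝ^ℓ`
the function `τ ↦ 2⟨η,τ⟩ − K_λ(τ)` is bounded above iff `η` lies in the moment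
polytope `Δ`, and it attains a finite maximum iff `η` lies in the image of the
moment map `J = (J₁,…,J_ℓ)`. -/
theorem bounded_iff_in_polytope_and_max_iff_in_image {ℓ : ℕ} (l : Fin ℓ → ℤ)
    (c : Fin ℓ → Fin ℓ → ℤ)
    (hpos : ∀ τ : Fin ℓ → ℝ, ∀ j : Fin ℓ, 0 < (l j : ℝ) - Lfun l c j τ)
    (η : Fin ℓ → ℝ) :
    (BddAbove (Set.range fun τ : Fin ℓ → ℝ =>
        2 * (∑ i, η i * τ i) - Klam l c τ) ↔
      ∀ j : Fin ℓ, 0 ≤ η j ∧ η j ≤ (l j : ℝ) -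
        ∑ i ∈ Finset.univ.filter (fun i => i < j), (c j i : ℝ) * η i) ∧
    ((∃ τ₀ : Fin ℓ → ℝ, ∀ τ : Fin ℓ → ℝ,
        2 * (∑ i, η i * τ i) - Klam l c τ ≤
          2 * (∑ i, η i * τ₀ i) - Klam l c τ₀) ↔
      ∃ τ₀ : Fin ℓ → ℝ, ∀ j : Fin ℓ, η j = Jact l c j τ₀) := by
  constructor
  · -- part (i)
    constructor
    · rintro ⟨M, hM⟩ j
      have hFle : ∀ τ : Fin ℓ → ℝ, 2 * (∑ i, η i * τ i) - Klam l c τ ≤ M :=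
        fun τ => hM (Set.mem_range_self τ)
      set C : ℝ := ∑ k ∈ Finset.univ.erase j,
        (2 * η k * 0 - mcoef l c η k * Kfun 0) with hC
      set m : ℝ := mcoef l c η j with hm
      have hgt : ∀ t : ℝ, 2 * η j * t - m * Kfun t + C ≤ M := by
        intro t
        have h1 := hFle (Phi c (Pi.single j t))
        rw [F_Phi_eq] at h1
        rw [← Finset.add_sum_erase _ _ (Finset.mem_univ j)] at h1
        have h2 : ∑ k ∈ Finset.univ.erase j,
            (2 * η k * (Pi.single j t : Fin ℓ → ℝ) k
              - mcoef l c η k * Kfun ((Pi.single j t : Fin ℓ → ℝ) k)) = C := by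
          apply Finset.sum_congr rfl
          intro k hk
          have hkj : k ≠ j := Finset.ne_of_mem_erase hk
          simp only [Pi.single_eq_of_ne hkj]
        rw [h2, Pi.single_eq_same] at h1
        linarith
      constructor
      · by_contra hneg
        push_neg at hneg
        set t : ℝ := (|M - C| + |m| + 1) / (2 * η j) with ht
        have htneg : t < 0 := div_neg_of_pos_of_neg (by positivity) (by linarith)
        have h2t : 2 * η j * t = |M - C| + |m| + 1 := by
          have hne : 2 * η j ≠ 0 := by intro h0; linarith
          rw [ht, mul_div_cancel₀ _ hne]
        have hKt1 : Kfun t ≤ 1 := by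
          have h := Kfun_le t
          have : max 0 (2 * t) = 0 := max_eq_left (by linarith)
          rw [this] at h; linarith
        have hmK : m * Kfun t ≤ |m| := by
          nlinarith [le_abs_self m, Kfun_nonneg t, abs_nonneg m]
        have := hgt t
        have habs := le_abs_self (M - C)
        linarith
      · by_contra hlt
        push_neg at hlt
        have hmlt : m < η j := by rw [hm, mcoef]; exact hlt
        set t : ℝ := (|M - C| + |m| + 1) / (2 * (η j - m)) with ht
        have htpos : 0 < t := div_pos (by positivity) (by linarith)
        have h2t : 2 * (η j - m) * t = |M - C| + |m| + 1 := by
          have hne : 2 * (η j - m) ≠ 0 := by intro h0; linarith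
          rw [ht, mul_div_cancel₀ _ hne]
        have hKt : Kfun t ≤ 2 * t + 1 := by
          have h := Kfun_le t
          have : max 0 (2 * t) = 2 * t := max_eq_right (by linarith)
          rw [this] at h; linarith
        have hKt2 := two_mul_le_Kfun t
        have hmK : m * (Kfun t - 2 * t) ≤ |m| := by
          nlinarith [le_abs_self m, abs_nonneg m]
        have := hgt t
        have habs := le_abs_self (M - C)
        nlinarith
    · intro h
      refine ⟨0, ?_⟩
      rintro x ⟨τ, rfl⟩
      show 2 * (∑ i, η i * τ i) - Klam l c τ ≤ 0
      have e := F_Phi_eq l c η (Psi c τ)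
      rw [Phi_Psi c τ] at e
      rw [e]
      exact Finset.sum_nonpos fun k _ => g_nonpos (h k).1 (h k).2
  · -- part (ii)
    constructor
    · rintro ⟨τ₀, hmax⟩
      refine ⟨τ₀, fun j => ?_⟩
      have hloc : IsLocalMax (fun τ : Fin ℓ → ℝ => 2 * (∑ i, η i * τ i) - Klam l c τ) τ₀ :=
        Filter.Eventually.of_forall hmax
      have hfz := hloc.fderiv_eq_zero
      have hF : HasFDerivAt (fun τ : Fin ℓ → ℝ => 2 * (∑ i, η i * τ i) - Klam l c τ)
          ((∑ i, (2 * η i) • proj' i) - fderiv ℝ (Klam l c) τ₀) τ₀ :=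
        (hasFDerivAt_lin η τ₀).sub (diff_Klam l c τ₀).hasFDerivAt
      have heq := hF.fderiv
      rw [hfz] at heq
      have happ := congrArg (fun T : (Fin ℓ → ℝ) →L[ℝ] ℝ => T (Pi.single j 1)) heq
      simp only [ContinuousLinearMap.zero_apply, ContinuousLinearMap.sub_apply] at happ
      rw [lin_single, fderiv_Klam_single] at happ
      linarith
    · rintro ⟨τ₀, hJ⟩
      have hτ0 : Phi c (Psi c τ₀) = τ₀ := Phi_Psi c τ₀
      have hL : ∀ k, Lfun l c k τ₀ = (l k : ℝ) - mcoef l c η k := by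
        intro k
        rw [Lfun, mcoef]
        have : ∑ i ∈ Finset.univ.filter (fun i => i < k), (c k i : ℝ) * Jact l c i τ₀
            = ∑ i ∈ Finset.univ.filter (fun i => i < k), (c k i : ℝ) * η i := by
          apply Finset.sum_congr rfl
          intro i _; rw [← hJ i]
        rw [this]; ring
      have hmk : ∀ k, 0 < mcoef l c η k := by
        intro k
        have := hpos τ₀ k
        rw [hL k] at this; linarith
      have hη : ∀ k, η k = mcoef l c η k * Jfun (Psi c τ₀ k) := by
        intro k
        rw [hJ k, ← hτ0, Jact_formula, hτ0, hL k]
        ring_nf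
      refine ⟨τ₀, fun τ => ?_⟩
      have e := F_Phi_eq l c η (Psi c τ)
      rw [Phi_Psi c τ] at e
      have e0 := F_Phi_eq l c η (Psi c τ₀)
      rw [hτ0] at e0
      rw [e, e0]
      exact Finset.sum_le_sum fun k _ => g_max (hmk k) (hη k) _
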